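/- Let M₂ be the 4×4 symmetric positive definite matrix with upper-left 2×2 block [[1/α², −β/α²],[−β/α², 1+β²/α²]] (α>0, β≠0) and lower-right 2×2 block the identity. A matrix A = diag(1, a₆, B) (with B a 2×2 block) satisfies AᵀM₂A = M₂ if and only if a₆ = 1 and B ∈ O(2). -/

import Mathlib

open Matrix

theorem isometric_automorphisms_M2_G21 (α β : ℝ) (hα : 0 < α) (hβ : β ≠ 0)
    (a₆ : ℝ) (B : Matrix (Fin 2) (Fin 2) ℝ) :
    (!![(1:ℝ), 0, 0, 0;
        0, a₆, 0, 0;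
        0, 0, B 0 0, B 0 1;
        0, 0, B 1 0, B 1 1])ᵀ *
      !![1/α^2, -β/α^2, 0, 0; -β/α^2, 1 + β^2/α^2, 0, 0; 0, 0, 1, 0; 0, 0, 0, (1:ℝ)] *
      !![(1:ℝ), 0, 0, 0;
        0, a₆, 0, 0;
        0, 0, B 0 0, B 0 1;
        0, 0, B 1 0, B 1 1] =
      !![1/α^2, -β/α^2, 0, 0; -β/α^2, 1 + β^2/α^2, 0, 0; 0, 0, 1, 0; 0, 0, 0, (1:ℝ)] ↔
    a₆ = 1 ∧ B ∈ Matrix.orthogonalGroup (Fin 2) ℝ := by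
  rw [Matrix.mem_orthogonalGroup_iff']
  have hα2 : α^2 ≠ 0 := by positivity
  constructor
  · intro h
    have h01 := congrFun (congrFun h 0) 1
    have h22 := congrFun (congrFun h 2) 2
    have h23 := congrFun (congrFun h 2) 3
    have h32 := congrFun (congrFun h 3) 2
    have h33 := congrFun (congrFun h 3) 3
    simp [Matrix.mul_apply, Fin.sum_univ_succ] at h01 h22 h23 h32 h33
    field_simp at h01
    have h01 : a₆ = 1 := by linarith
    refine ⟨h01, ?_⟩
    subst h01
    ext i j
    fin_cases i <;> fin_cases j <;>
      simp [Matrix.mul_apply, Fin.sum_univ_succ, Matrix.one_apply] <;> linarith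
  · rintro ⟨ha, hB⟩
    subst ha
    have h00 := congrFun (congrFun hB 0) 0
    have h01 := congrFun (congrFun hB 0) 1
    have h10 := congrFun (congrFun hB 1) 0
    have h11 := congrFun (congrFun hB 1) 1
    simp [Matrix.mul_apply, Fin.sum_univ_succ, Matrix.one_apply] at h00 h01 h10 h11
    ext i j
    fin_cases i <;> fin_cases j <;>
      simp [Matrix.mul_apply, Fin.sum_univ_succ, Matrix.vecHead, Matrix.vecTail] <;> linarith
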